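/- arXiv:2303.03883 — 2 statements merged into one kernel-verified Lean document; each statement's English description precedes it below -/
import Mathlib

section
/- For real symmetric positive definite n×n matrices A and B, Tr(A) + Tr(B) − 2Tr(√(√A·B·√A)) ≥ 0, with equality if and only if A = B. -/
open Matrix BigOperators

open Classical in
noncomputable def msqrt {n : ℕ} (M : Matrix (Fin n) (Fin n) ℝ) : Matrix (Fin n) (Fin n) ℝ :=
  if h : M.PosSemidef then
    h.1.eigenvectorUnitary.1 * diagonal ((↑) ∘ (√·) ∘ h.1.eigenvalues) *
      (star h.1.eigenvectorUnitary : Matrix (Fin n) (Fin n) ℝ) else 0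

noncomputable def fnorm {n : ℕ} (A : Matrix (Fin n) (Fin n) ℝ) : ℝ :=
  Real.sqrt (∑ i, ∑ j, (A i j) ^ 2)

theorem msqrt_eq_cfc {n : ℕ} {M : Matrix (Fin n) (Fin n) ℝ} (h : M.PosSemidef) :
    msqrt M = cfc Real.sqrt M := by
  rw [msqrt, dif_pos h, h.1.cfc_eq, IsHermitian.cfc]
  simp
  rfl

theorem spec_nonneg {n : ℕ} {M : Matrix (Fin n) (Fin n) ℝ} (h : M.PosSemidef) :
    ∀ x ∈ spectrum ℝ M, 0 ≤ x := by
  intro x hx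
  rw [h.1.spectrum_real_eq_range_eigenvalues] at hx
  obtain ⟨i, rfl⟩ := hx
  exact h.eigenvalues_nonneg i

theorem msqrt_mul_self {n : ℕ} {M : Matrix (Fin n) (Fin n) ℝ} (h : M.PosSemidef) :
    msqrt M * msqrt M = M := by
  rw [msqrt_eq_cfc h, ← cfc_mul Real.sqrt Real.sqrt M (hf := by fun_prop) (hg := by fun_prop)]
  conv_rhs => rw [← cfc_id ℝ M h.1.isSelfAdjoint]
  exact cfc_congr fun x hx => Real.mul_self_sqrt (spec_nonneg h x hx)

theorem msqrt_posSemidef {n : ℕ} {M : Matrix (Fin n) (Fin n) ℝ} (h : M.PosSemidef) :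
    (msqrt M).PosSemidef := by
  open scoped MatrixOrder in
  rw [msqrt_eq_cfc h, ← Matrix.nonneg_iff_posSemidef]
  open scoped MatrixOrder in
  exact cfc_nonneg fun x _ => Real.sqrt_nonneg x

theorem eq_msqrt_of_sq_eq {n : ℕ} {M N : Matrix (Fin n) (Fin n) ℝ} (hN : N.PosSemidef)
    (hM : M.PosSemidef) (hsq : N ^ 2 = M) : N = msqrt M := by
  rw [msqrt_eq_cfc hM, ← hsq, ← cfc_comp_pow Real.sqrt 2 N (hf := by fun_prop) (ha := hN.1.isSelfAdjoint)]
  conv_lhs => rw [← cfc_id ℝ N hN.1.isSelfAdjoint]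
  exact cfc_congr fun x hx => (Real.sqrt_sq (spec_nonneg hN x hx)).symm

theorem stmt_10 {n : ℕ} (A B : Matrix (Fin n) (Fin n) ℝ)
    (hA : A.PosDef) (hB : B.PosDef) :
    0 ≤ A.trace + B.trace - 2 * (msqrt (msqrt A * B * msqrt A)).trace ∧
    (A.trace + B.trace - 2 * (msqrt (msqrt A * B * msqrt A)).trace = 0 ↔ A = B) := by
  have hAps := hA.posSemidef
  have hBps := hB.posSemidef
  obtain ⟨S, hSdef⟩ : ∃ X : Matrix (Fin n) (Fin n) ℝ, X = msqrt A := ⟨_, rfl⟩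
  obtain ⟨C, hCdef⟩ : ∃ X : Matrix (Fin n) (Fin n) ℝ, X = msqrt B := ⟨_, rfl⟩
  have hSherm : Sᵀ = S := by rw [hSdef]; exact (msqrt_posSemidef hAps).1
  have hCherm : Cᵀ = C := by rw [hCdef]; exact (msqrt_posSemidef hBps).1
  have hSS : S * S = A := by rw [hSdef]; exact msqrt_mul_self hAps
  have hCC : C * C = B := by rw [hCdef]; exact msqrt_mul_self hBps
  have hmA : msqrt A = S := by rw [hSdef]
  have hM : (S * B * S).PosSemidef := by
    have := hBps.mul_mul_conjTranspose_same S
    simpa [Matrix.conjTranspose_eq_transpose_of_trivial, hSherm] using this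
  obtain ⟨T, hTdef⟩ : ∃ X : Matrix (Fin n) (Fin n) ℝ, X = msqrt (S * B * S) := ⟨_, rfl⟩
  have hTherm : Tᵀ = T := by rw [hTdef]; exact (msqrt_posSemidef hM).1
  have hTT : T * T = S * B * S := by rw [hTdef]; exact msqrt_mul_self hM
  have hmT : msqrt (msqrt A * B * msqrt A) = T := by
    rw [hmA, hTdef]
  -- invertibility
  have hdetS : IsUnit S.det := by
    have h : S.det * S.det = A.det := by rw [← Matrix.det_mul, hSS]
    refine isUnit_iff_ne_zero.mpr fun h0 => ?_
    rw [h0, mul_zero] at h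
    exact hA.det_pos.ne' h.symm
  have hdetT : IsUnit T.det := by
    have h : T.det * T.det = S.det * B.det * S.det := by
      rw [← Matrix.det_mul, hTT, Matrix.det_mul, Matrix.det_mul]
    refine isUnit_iff_ne_zero.mpr fun h0 => ?_
    rw [h0, mul_zero] at h
    rcases mul_eq_zero.mp h.symm with h1 | h1
    · rcases mul_eq_zero.mp h1 with h2 | h2
      · exact hdetS.ne_zero h2
      · exact hB.det_pos.ne' h2
    · exact hdetS.ne_zero h1
  obtain ⟨U, hUdef⟩ : ∃ X : Matrix (Fin n) (Fin n) ℝ, X = T⁻¹ * (S * C) := ⟨_, rfl⟩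
  have hTU : T * U = S * C := by
    rw [hUdef, Matrix.mul_nonsing_inv_cancel_left _ _ hdetT]
  have hSCCS : (S * C) * (C * S) = T * T := by
    rw [hTT, ← hCC]; noncomm_ring
  have hUUt : U * Uᵀ = 1 := by
    have hTinv : T⁻¹ᵀ = T⁻¹ := by rw [Matrix.transpose_nonsing_inv, hTherm]
    have h1 : U * Uᵀ = T⁻¹ * ((S * C) * (C * S)) * T⁻¹ := by
      rw [hUdef, Matrix.transpose_mul, hTinv, Matrix.transpose_mul, hSherm, hCherm]
      noncomm_ring
    have h2 : T⁻¹ * (T * T) * T⁻¹ = (T⁻¹ * T) * (T * T⁻¹) := by noncomm_ring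
    rw [h1, hSCCS, h2, Matrix.nonsing_inv_mul _ hdetT, Matrix.mul_nonsing_inv _ hdetT,
      Matrix.one_mul]
  have hUtU : Uᵀ * U = 1 := mul_eq_one_comm.mp hUUt
  obtain ⟨D, hDdef⟩ : ∃ X : Matrix (Fin n) (Fin n) ℝ, X = S - C * Uᵀ := ⟨_, rfl⟩
  -- trace computations
  have htr1 : (S * (C * Uᵀ)).trace = T.trace := by
    rw [show S * (C * Uᵀ) = (S * C) * Uᵀ from (Matrix.mul_assoc _ _ _).symm, ← hTU,
      Matrix.mul_assoc, hUUt, Matrix.mul_one]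
  have htr2 : ((C * Uᵀ)ᵀ * S).trace = T.trace := by
    have h : ((C * Uᵀ)ᵀ * S)ᵀ = S * (C * Uᵀ) := by
      rw [Matrix.transpose_mul, Matrix.transpose_transpose, hSherm]
    rw [← Matrix.trace_transpose ((C * Uᵀ)ᵀ * S), h, htr1]
  have htr3 : ((C * Uᵀ)ᵀ * (C * Uᵀ)).trace = B.trace := by
    have h1 : (C * Uᵀ)ᵀ * (C * Uᵀ) = U * ((C * C) * Uᵀ) := by
      rw [Matrix.transpose_mul, Matrix.transpose_transpose, hCherm]
      noncomm_ring
    rw [h1, hCC, Matrix.trace_mul_comm, Matrix.mul_assoc, hUtU, Matrix.mul_one]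
  have hkey : A.trace + B.trace - 2 * T.trace = (Dᵀ * D).trace := by
    have hexp : Dᵀ * D = S * S - S * (C * Uᵀ) - (C * Uᵀ)ᵀ * S + (C * Uᵀ)ᵀ * (C * Uᵀ) := by
      rw [hDdef, Matrix.transpose_sub, hSherm]
      noncomm_ring
    rw [hexp, Matrix.trace_add, Matrix.trace_sub, Matrix.trace_sub, hSS, htr1, htr2, htr3]
    ring
  have htr_sq : (Dᵀ * D).trace = ∑ j, ∑ i, (D i j) ^ 2 := by
    rw [Matrix.trace]
    refine Finset.sum_congr rfl fun j _ => ?_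
    simp [Matrix.diag, Matrix.mul_apply, Matrix.transpose_apply, sq]
  have hnonneg : 0 ≤ A.trace + B.trace - 2 * T.trace := by
    rw [hkey, htr_sq]
    exact Finset.sum_nonneg fun j _ => Finset.sum_nonneg fun i _ => sq_nonneg _
  refine ⟨by rwa [hmT], ?_⟩
  rw [hmT]
  constructor
  · intro h0
    have hD0 : D = 0 := by
      rw [hkey, htr_sq] at h0
      ext i j
      have hz := (Finset.sum_eq_zero_iff_of_nonneg fun j _ =>
        Finset.sum_nonneg fun i _ => sq_nonneg (D i j)).mp h0 j (Finset.mem_univ j)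
      have hz2 := (Finset.sum_eq_zero_iff_of_nonneg fun i _ =>
        sq_nonneg (D i j)).mp hz i (Finset.mem_univ i)
      simpa using pow_eq_zero_iff (n := 2) (by norm_num) |>.mp hz2
    have hSC : S = C * Uᵀ := by
      have := hDdef ▸ hD0
      exact sub_eq_zero.mp this
    calc A = S * Sᵀ := by rw [hSherm, hSS]
      _ = (C * Uᵀ) * (C * Uᵀ)ᵀ := by rw [← hSC]
      _ = C * ((Uᵀ * U) * Cᵀ) := by
          rw [Matrix.transpose_mul, Matrix.transpose_transpose]; noncomm_ring
      _ = B := by rw [hUtU, Matrix.one_mul, hCherm, hCC]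
  · intro hAB
    have hTA : T = A := by
      have hsq : A ^ 2 = S * B * S := by
        rw [← hAB, ← hSS, sq]; noncomm_ring
      rw [hTdef]
      exact (eq_msqrt_of_sq_eq hAps hM hsq).symm
    rw [hTA, ← hAB]
    ring
end

section
/- For a fixed real symmetric positive definite n×n matrix A, the function X ↦ ρ²(A,X) = Tr(A) + Tr(X) − 2Tr(√(√A·X·√A)) is convex on the cone of positive definite matrices. -/
open Matrix BigOperators

open Classical in
noncomputable def Matrix.PosSemidef.sqrt {n : ℕ} {M : Matrix (Fin n) (Fin n) ℝ}
    (h : M.PosSemidef) : Matrix (Fin n) (Fin n) ℝ :=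
  h.1.eigenvectorUnitary.1 * diagonal ((↑) ∘ (√·) ∘ h.1.eigenvalues) *
    (star h.1.eigenvectorUnitary : Matrix (Fin n) (Fin n) ℝ)

theorem Matrix.PosSemidef.posSemidef_sqrt {n : ℕ} {M : Matrix (Fin n) (Fin n) ℝ}
    (h : M.PosSemidef) : h.sqrt.PosSemidef := by
  unfold Matrix.PosSemidef.sqrt
  rw [Matrix.star_eq_conjTranspose]
  refine Matrix.PosSemidef.mul_mul_conjTranspose_same (Matrix.PosSemidef.diagonal ?_) _
  intro i
  simp [Real.sqrt_nonneg]

theorem Matrix.PosSemidef.sqrt_mul_self {n : ℕ} {M : Matrix (Fin n) (Fin n) ℝ}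
    (h : M.PosSemidef) : h.sqrt * h.sqrt = M := by
  have hs := h.1.spectral_theorem
  rw [Unitary.conjStarAlgAut_apply] at hs
  conv_rhs => rw [hs]
  have hU := Unitary.coe_star_mul_self h.1.eigenvectorUnitary
  unfold Matrix.PosSemidef.sqrt
  calc _ = h.1.eigenvectorUnitary.1 * (diagonal ((↑) ∘ (√·) ∘ h.1.eigenvalues) *
        ((star h.1.eigenvectorUnitary : Matrix (Fin n) (Fin n) ℝ) * h.1.eigenvectorUnitary.1) *
        diagonal ((↑) ∘ (√·) ∘ h.1.eigenvalues)) *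
        (star h.1.eigenvectorUnitary : Matrix (Fin n) (Fin n) ℝ) := by
          simp only [Matrix.mul_assoc]
    _ = _ := by
      rw [hU, Matrix.mul_one, Matrix.diagonal_mul_diagonal]
      congr 3
      funext i
      simp [Real.mul_self_sqrt (h.eigenvalues_nonneg i)]

-- helper lemmas
lemma tr_ctms_nonneg {n : ℕ} (M : Matrix (Fin n) (Fin n) ℝ) : 0 ≤ (Mᴴ * M).trace := by
  rw [Matrix.trace]
  refine Finset.sum_nonneg fun j _ => ?_
  rw [Matrix.diag_apply, Matrix.mul_apply]
  refine Finset.sum_nonneg fun i _ => ?_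
  rw [Matrix.conjTranspose_apply, star_trivial]
  exact mul_self_nonneg _

lemma tr_psd_nonneg {n : ℕ} {M : Matrix (Fin n) (Fin n) ℝ} (hM : M.PosSemidef) :
    0 ≤ M.trace := by
  exact hM.trace_nonneg

lemma tr_mul_psd_nonneg {n : ℕ} {P Q : Matrix (Fin n) (Fin n) ℝ}
    (hP : P.PosSemidef) (hQ : Q.PosSemidef) : 0 ≤ (P * Q).trace := by
  obtain ⟨C, rfl⟩ : ∃ C, P = Cᴴ * C :=
    ⟨hP.sqrt, by rw [hP.posSemidef_sqrt.1.eq, hP.sqrt_mul_self]⟩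
  obtain ⟨D, rfl⟩ : ∃ D, Q = Dᴴ * D :=
    ⟨hQ.sqrt, by rw [hQ.posSemidef_sqrt.1.eq, hQ.sqrt_mul_self]⟩
  have h : (Cᴴ * C * (Dᴴ * D)).trace = ((C * Dᴴ)ᴴ * (C * Dᴴ)).trace := by
    rw [Matrix.conjTranspose_mul, Matrix.conjTranspose_conjTranspose,
      Matrix.trace_mul_comm]
    simp only [Matrix.mul_assoc]
    rw [Matrix.trace_mul_comm Dᴴ]
    simp only [Matrix.mul_assoc]
  rw [h]
  exact tr_ctms_nonneg _

lemma posDef_conj {n : ℕ} {P Q : Matrix (Fin n) (Fin n) ℝ}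
    (hP : P.PosDef) (hQ : Q.PosDef) : (Q * P * Q).PosDef := by
  have hQH : Qᴴ = Q := hQ.isHermitian.eq
  rw [Matrix.posDef_iff_dotProduct_mulVec]
  constructor
  · have := Matrix.isHermitian_conjTranspose_mul_mul Q hP.1
    rwa [hQH] at this
  · intro x hx
    have hxQ : Q *ᵥ x ≠ 0 := by
      intro h
      exact hx (Matrix.mulVec_injective_iff_isUnit.mpr hQ.isUnit (h.trans (Matrix.mulVec_zero Q).symm))
    have := hP.dotProduct_mulVec_pos hxQ
    have e : Q * P * Q = Qᴴ * P * Q := by rw [hQH]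
    rw [e]
    simpa only [star_mulVec, dotProduct_mulVec, vecMul_vecMul] using this

lemma posDef_sqrt {n : ℕ} {X : Matrix (Fin n) (Fin n) ℝ} (hX : X.PosDef) :
    (hX.posSemidef.sqrt).PosDef := by
  set S := hX.posSemidef.sqrt with hS
  have hSP : S.PosSemidef := hX.posSemidef.posSemidef_sqrt
  refine Matrix.posDef_iff_dotProduct_mulVec.mpr ⟨hSP.1, fun x hx => ?_⟩
  rcases lt_or_eq_of_le (hSP.dotProduct_mulVec_nonneg x) with h | h
  · exact h
  · exfalso
    have h0 : S *ᵥ x = 0 := (hSP.dotProduct_mulVec_zero_iff x).mp h.symm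
    have hXx : X *ᵥ x = 0 := by
      have : S * S = X := hX.posSemidef.sqrt_mul_self
      rw [← this, ← Matrix.mulVec_mulVec, h0, Matrix.mulVec_zero]
    have := hX.dotProduct_mulVec_pos hx
    rw [hXx, dotProduct_zero] at this
    exact lt_irrefl 0 this

lemma key_ineq {n : ℕ} {B X S K : Matrix (Fin n) (Fin n) ℝ}
    (hB : B.PosDef) (hX : X.PosDef) (hS : S.PosDef) (hBXB : B * X * B = S * S)
    (hK : (X - K * Kᴴ).PosSemidef) : (B * K).trace ≤ S.trace := by
  have hBd : IsUnit B.det := hB.det_pos.ne'.isUnit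
  have hSd : IsUnit S.det := hS.det_pos.ne'.isUnit
  set W : Matrix (Fin n) (Fin n) ℝ := B⁻¹ * S * B⁻¹ with hWdef
  have hW : W.PosDef := posDef_conj hS hB.inv
  obtain ⟨V, hV, hVV⟩ : ∃ V : Matrix (Fin n) (Fin n) ℝ, V.PosDef ∧ V * V = W :=
    ⟨hW.posSemidef.sqrt, posDef_sqrt hW, hW.posSemidef.sqrt_mul_self⟩
  have hVd : IsUnit V.det := hV.det_pos.ne'.isUnit
  have hVH : Vᴴ = V := hV.isHermitian.eq
  have hVIH : (V⁻¹)ᴴ = V⁻¹ := hV.inv.isHermitian.eq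
  have hBH : Bᴴ = B := hB.isHermitian.eq
  -- expand Nᴴ N
  set N : Matrix (Fin n) (Fin n) ℝ := V * B - V⁻¹ * K with hNdef
  have e1 : B * V * (V * B) = B * W * B := by
    rw [← hVV]; simp only [Matrix.mul_assoc]
  have e2 : B * V * (V⁻¹ * K) = B * K := by
    rw [Matrix.mul_assoc, Matrix.mul_nonsing_inv_cancel_left _ _ hVd]
  have e3 : Kᴴ * V⁻¹ * (V * B) = Kᴴ * B := by
    rw [Matrix.mul_assoc, Matrix.nonsing_inv_mul_cancel_left _ _ hVd]
  have hNN : Nᴴ * N = B * W * B - B * K - (Kᴴ * B - Kᴴ * V⁻¹ * (V⁻¹ * K)) := by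
    rw [hNdef, Matrix.conjTranspose_sub, Matrix.conjTranspose_mul,
      Matrix.conjTranspose_mul, hVH, hVIH, hBH, Matrix.sub_mul, Matrix.mul_sub,
      Matrix.mul_sub, e1, e2, e3]
  have h0 : 0 ≤ (Nᴴ * N).trace := tr_ctms_nonneg N
  rw [hNN, Matrix.trace_sub, Matrix.trace_sub, Matrix.trace_sub] at h0
  have hKB : (Kᴴ * B).trace = (B * K).trace := by
    have : (B * K)ᴴ = Kᴴ * B := by rw [Matrix.conjTranspose_mul, hBH]
    rw [← this, Matrix.trace_conjTranspose, star_trivial]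
  -- Tr (B W B) = Tr S
  have hBWB : B * W * B = S := by
    rw [hWdef]
    calc B * (B⁻¹ * S * B⁻¹) * B = B * B⁻¹ * S * (B⁻¹ * B) := by
          simp only [Matrix.mul_assoc]
      _ = S := by
          rw [Matrix.mul_nonsing_inv _ hBd, Matrix.nonsing_inv_mul _ hBd,
            Matrix.one_mul, Matrix.mul_one]
  -- bound the quadratic term
  have hcyc : (Kᴴ * V⁻¹ * (V⁻¹ * K)).trace = (V⁻¹ * (K * Kᴴ) * V⁻¹).trace := by
    rw [Matrix.trace_mul_comm (Kᴴ * V⁻¹) (V⁻¹ * K)]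
    simp only [Matrix.mul_assoc]
  have hmono : (V⁻¹ * (K * Kᴴ) * V⁻¹).trace ≤ (V⁻¹ * X * V⁻¹).trace := by
    have hpsd : (V⁻¹ * (X - K * Kᴴ) * V⁻¹).PosSemidef := by
      have := hK.mul_mul_conjTranspose_same V⁻¹
      rwa [hVIH] at this
    have htr := tr_psd_nonneg hpsd
    rw [Matrix.mul_sub, Matrix.sub_mul, Matrix.trace_sub] at htr
    linarith
  have hVX : (V⁻¹ * X * V⁻¹).trace = S.trace := by
    have hWinv : V⁻¹ * V⁻¹ = B * (S⁻¹ * B) := by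
      have h1 : V⁻¹ * V⁻¹ = W⁻¹ := by rw [← Matrix.mul_inv_rev, hVV]
      rw [h1, hWdef, Matrix.mul_inv_rev, Matrix.mul_inv_rev,
        Matrix.nonsing_inv_nonsing_inv _ hBd]
    calc (V⁻¹ * X * V⁻¹).trace = (V⁻¹ * (V⁻¹ * X)).trace := by
          rw [Matrix.trace_mul_comm (V⁻¹ * X) V⁻¹]
      _ = (V⁻¹ * V⁻¹ * X).trace := by rw [← Matrix.mul_assoc]
      _ = (B * (S⁻¹ * B) * X).trace := by rw [hWinv]
      _ = (S⁻¹ * (B * X * B)).trace := by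
          rw [Matrix.mul_assoc B (S⁻¹ * B) X, Matrix.trace_mul_comm B (S⁻¹ * B * X)]
          simp only [Matrix.mul_assoc]
      _ = (S⁻¹ * (S * S)).trace := by rw [hBXB]
      _ = S.trace := by
          rw [← Matrix.mul_assoc, Matrix.nonsing_inv_mul _ hSd, Matrix.one_mul]
  rw [hBWB, hcyc] at h0
  linarith

lemma posSemidef_smul' {n : ℕ} {a : ℝ} (ha : 0 ≤ a) {X : Matrix (Fin n) (Fin n) ℝ}
    (hX : X.PosSemidef) : (a • X).PosSemidef := by
  refine Matrix.posSemidef_iff_dotProduct_mulVec.mpr ⟨?_, fun x => ?_⟩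
  · rw [Matrix.IsHermitian, Matrix.conjTranspose_smul, star_trivial, hX.1.eq]
  · rw [Matrix.smul_mulVec, dotProduct_smul, smul_eq_mul]
    exact mul_nonneg ha (hX.dotProduct_mulVec_nonneg x)

lemma posDef_smul' {n : ℕ} {a : ℝ} (ha : 0 < a) {X : Matrix (Fin n) (Fin n) ℝ}
    (hX : X.PosDef) : (a • X).PosDef := by
  refine Matrix.posDef_iff_dotProduct_mulVec.mpr ⟨?_, fun x hx => ?_⟩
  · rw [Matrix.IsHermitian, Matrix.conjTranspose_smul, star_trivial, hX.1.eq]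
  · rw [Matrix.smul_mulVec, dotProduct_smul, smul_eq_mul]
    exact mul_pos ha (hX.dotProduct_mulVec_pos hx)

lemma posDef_comb {n : ℕ} {a b : ℝ} (ha : 0 ≤ a) (hb : 0 ≤ b) (hab : a + b = 1)
    {x y : Matrix (Fin n) (Fin n) ℝ} (hx : x.PosDef) (hy : y.PosDef) :
    (a • x + b • y).PosDef := by
  rcases eq_or_lt_of_le ha with h | h
  · have hb1 : b = 1 := by linarith
    simpa [← h, hb1] using hy
  · exact (posDef_smul' h hx).add_posSemidef (posSemidef_smul' hb hy.posSemidef)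

lemma KK_eq {n : ℕ} {B S x : Matrix (Fin n) (Fin n) ℝ} (hB : B.PosDef) (hS : Sᴴ = S)
    (hSS : S * S = B * x * B) : (B⁻¹ * S) * (B⁻¹ * S)ᴴ = x := by
  have hBd : IsUnit B.det := hB.det_pos.ne'.isUnit
  have hBiH : (B⁻¹)ᴴ = B⁻¹ := hB.inv.isHermitian.eq
  rw [Matrix.conjTranspose_mul, hS, hBiH]
  calc B⁻¹ * S * (S * B⁻¹) = B⁻¹ * (S * S) * B⁻¹ := by simp only [Matrix.mul_assoc]
    _ = B⁻¹ * (B * x * B) * B⁻¹ := by rw [hSS]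
    _ = x := by
        rw [Matrix.mul_assoc B x B, Matrix.nonsing_inv_mul_cancel_left _ _ hBd,
          Matrix.mul_nonsing_inv_cancel_right _ _ hBd]

lemma comb_identity {n : ℕ} {a b : ℝ} (hab : a + b = 1) (P Q : Matrix (Fin n) (Fin n) ℝ) :
    (a • (P * Pᴴ) + b • (Q * Qᴴ)) - (a • P + b • Q) * (a • P + b • Q)ᴴ
      = (a * b) • ((P - Q) * (P - Q)ᴴ) := by
  have hb : b = 1 - a := by linarith
  subst hb
  simp only [Matrix.conjTranspose_add, Matrix.conjTranspose_smul, Matrix.conjTranspose_sub,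
    star_trivial, Matrix.add_mul, Matrix.mul_add, Matrix.sub_mul, Matrix.mul_sub,
    smul_mul_assoc, mul_smul_comm, smul_smul, smul_add, smul_sub]
  module

theorem stmt_16 {n : ℕ} (A : Matrix (Fin n) (Fin n) ℝ) (hA : A.PosDef) :
    ConvexOn ℝ {X : Matrix (Fin n) (Fin n) ℝ | X.PosDef}
      (fun X => A.trace + X.trace - 2 * (msqrt (msqrt A * X * msqrt A)).trace) := by
  constructor
  · intro x hx y hy a b ha hb hab
    exact posDef_comb ha hb hab hx hy
  · intro x hx y hy a b ha hb hab
    simp only [Set.mem_setOf_eq] at hx hy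
    obtain ⟨B, hB, hBB, hmsA⟩ :
        ∃ B : Matrix (Fin n) (Fin n) ℝ, B.PosDef ∧ B * B = A ∧ msqrt A = B :=
      ⟨hA.posSemidef.sqrt, posDef_sqrt hA, hA.posSemidef.sqrt_mul_self,
        by simp only [msqrt, dif_pos hA.posSemidef]; rfl⟩
    have hBd : IsUnit B.det := hB.det_pos.ne'.isUnit
    have hg : ∀ {M : Matrix (Fin n) (Fin n) ℝ}, M.PosDef →
        ∃ S : Matrix (Fin n) (Fin n) ℝ, S.PosDef ∧ S * S = B * M * B ∧
          msqrt (B * M * B) = S := by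
      intro M hM
      have h2 : (B * M * B).PosDef := posDef_conj hM hB
      exact ⟨h2.posSemidef.sqrt, posDef_sqrt h2, h2.posSemidef.sqrt_mul_self,
        by simp only [msqrt, dif_pos h2.posSemidef]; rfl⟩
    have hz : (a • x + b • y).PosDef := posDef_comb ha hb hab hx hy
    obtain ⟨Sx, hSx, hSxx, hmx⟩ := hg hx
    obtain ⟨Sy, hSy, hSyy, hmy⟩ := hg hy
    obtain ⟨Sz, hSz, hSzz, hmz⟩ := hg hz
    -- the optimal K's
    set Kx : Matrix (Fin n) (Fin n) ℝ := B⁻¹ * Sx with hKxd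
    set Ky : Matrix (Fin n) (Fin n) ℝ := B⁻¹ * Sy with hKyd
    have hKx : Kx * Kxᴴ = x := KK_eq hB hSx.isHermitian.eq hSxx
    have hKy : Ky * Kyᴴ = y := KK_eq hB hSy.isHermitian.eq hSyy
    set K : Matrix (Fin n) (Fin n) ℝ := a • Kx + b • Ky with hKd
    have hKpsd : ((a • x + b • y) - K * Kᴴ).PosSemidef := by
      have := comb_identity hab Kx Ky
      rw [hKx, hKy] at this
      rw [hKd, this]
      exact posSemidef_smul' (mul_nonneg ha hb) (Matrix.posSemidef_self_mul_conjTranspose _)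
    have hkey : (B * K).trace ≤ Sz.trace := key_ineq hB hz hSz hSzz.symm hKpsd
    have htrK : (B * K).trace = a * Sx.trace + b * Sy.trace := by
      rw [hKd, Matrix.mul_add, mul_smul_comm, mul_smul_comm, Matrix.trace_add,
        Matrix.trace_smul, Matrix.trace_smul, hKxd, hKyd,
        Matrix.mul_nonsing_inv_cancel_left _ _ hBd, Matrix.mul_nonsing_inv_cancel_left _ _ hBd,
        smul_eq_mul, smul_eq_mul]
    rw [htrK] at hkey
    simp only [hmsA, hmx, hmy, hmz, smul_eq_mul]
    rw [Matrix.trace_add, Matrix.trace_smul, Matrix.trace_smul, smul_eq_mul, smul_eq_mul]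
    have hAtr : a * A.trace + b * A.trace = A.trace := by
      rw [← add_mul, hab, one_mul]
    nlinarith [hkey]
end
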